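/- Let f : S^{3×3} → ℝ be a quadratic form. Then the following three statements are equivalent: (i) f is symmetric polyconvex; (ii) there exist a convex quadratic form h : S^{3×3} → ℝ and a positive semi-definite matrix A ∈ S^{3×3} such that f(ε) = h(ε) − A:cof ε for all ε ∈ S^{3×3}; (iii) there exists a positive semi-definite matrix A ∈ S^{3×3} such that f(ε) + A:cof ε ≥ 0 for all ε ∈ S^{3×3}. -/

import Mathlib

open Matrix

/-- The symmetric part `(F + Fᵀ)/2` of a 3×3 matrix. -/
noncomputable def symPart (F : Matrix (Fin 3) (Fin 3) ℝ) : Matrix (Fin 3) (Fin 3) ℝ :=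
  (1 / 2 : ℝ) • (F + Fᵀ)

/-- The cofactor matrix: `(cof F)_{ij} = (-1)^{i+j}` times the determinant of the 2×2
matrix obtained from `F` by deleting row `i` and column `j`. -/
noncomputable def cof (F : Matrix (Fin 3) (Fin 3) ℝ) : Matrix (Fin 3) (Fin 3) ℝ :=
  Matrix.of fun i j =>
    (-1 : ℝ) ^ ((i : ℕ) + (j : ℕ)) * (F.submatrix i.succAbove j.succAbove).det

/-- Frobenius inner product `A:B = Σ_{i,j} A_{ij} B_{ij}` of 3×3 matrices. -/
def mdot (A B : Matrix (Fin 3) (Fin 3) ℝ) : ℝ := ∑ i, ∑ j, A i j * B i j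

/-- A function `W : ℝ^{3×3} → ℝ` is polyconvex if there is a convex function
`G : ℝ^{3×3} × ℝ^{3×3} × ℝ → ℝ` with `W F = G (F, cof F, det F)` for all `F`. -/
def Polyconvex3 (W : Matrix (Fin 3) (Fin 3) ℝ → ℝ) : Prop :=
  ∃ G : Matrix (Fin 3) (Fin 3) ℝ × Matrix (Fin 3) (Fin 3) ℝ × ℝ → ℝ,
    ConvexOn ℝ Set.univ G ∧ ∀ F : Matrix (Fin 3) (Fin 3) ℝ, W F = G (F, cof F, F.det)

/-- `f : S^{3×3} → ℝ` is symmetric polyconvex if `F ↦ f (Fˢ)` is polyconvex. -/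
def SymPolyconvex3 (f : Matrix (Fin 3) (Fin 3) ℝ → ℝ) : Prop :=
  Polyconvex3 (fun F => f (symPart F))

/-- `B ∈ S^{3×3}` is negative semi-definite: `Bx·x ≤ 0` for all `x ∈ ℝ³`. -/
def NegSemidefM (B : Matrix (Fin 3) (Fin 3) ℝ) : Prop :=
  ∀ x : Fin 3 → ℝ, B.mulVec x ⬝ᵥ x ≤ 0

/-- `A ∈ S^{3×3}` is positive semi-definite: `Ax·x ≥ 0` for all `x ∈ ℝ³`. -/
def PosSemidefM (A : Matrix (Fin 3) (Fin 3) ℝ) : Prop :=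
  ∀ x : Fin 3 → ℝ, 0 ≤ A.mulVec x ⬝ᵥ x

/-- The symmetrized tensor product `a ⊙ b = (a⊗b + b⊗a)/2`. -/
noncomputable def symProd (a b : Fin 3 → ℝ) : Matrix (Fin 3) (Fin 3) ℝ :=
  (1 / 2 : ℝ) • (vecMulVec a b + vecMulVec b a)

/-- `f : S^{3×3} → ℝ` is symmetric rank-one convex if `t ↦ f (ε + t a⊙b)` is convex
for every symmetric `ε` and all `a, b ∈ ℝ³`. -/
def SymRankOneConvex3 (f : Matrix (Fin 3) (Fin 3) ℝ → ℝ) : Prop :=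
  ∀ ε : Matrix (Fin 3) (Fin 3) ℝ, ε.IsSymm → ∀ a b : Fin 3 → ℝ,
    ConvexOn ℝ Set.univ (fun t : ℝ => f (ε + t • symProd a b))

/-- `f` is a quadratic form on `S^{3×3}`: `f ε = B ε ε` on symmetric matrices for some
symmetric bilinear form `B`. -/
def IsSymQuadForm3 (f : Matrix (Fin 3) (Fin 3) ℝ → ℝ) : Prop :=
  ∃ B : Matrix (Fin 3) (Fin 3) ℝ →ₗ[ℝ] Matrix (Fin 3) (Fin 3) ℝ →ₗ[ℝ] ℝ,
    (∀ X Y, B X Y = B Y X) ∧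
    ∀ ε : Matrix (Fin 3) (Fin 3) ℝ, ε.IsSymm → f ε = B ε ε

/-! ### Auxiliary material -/

attribute [local instance] Matrix.normedAddCommGroup Matrix.normedSpace

/-- Every convex function on a finite-dimensional normed space has a subgradient at . -/
lemma exists_subgradient {E : Type*} [NormedAddCommGroup E] [NormedSpace ℝ E]
    [FiniteDimensional ℝ E] {G : E → ℝ} (hG : ConvexOn ℝ Set.univ G) :
    ∃ ℓ : E →L[ℝ] ℝ, ∀ x, G 0 + ℓ x ≤ G x := by
  have hcont : Continuous G := by
    rw [← continuousOn_univ]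
    exact hG.continuousOn isOpen_univ
  set S : Set (E × ℝ) := {p | G p.1 < p.2} with hS
  have hSopen : IsOpen S := isOpen_lt (hcont.comp continuous_fst) continuous_snd
  have hSconv : Convex ℝ S := by
    intro p hp q hq a b ha hb hab
    simp only [hS, Set.mem_setOf_eq] at hp hq ⊢
    have h1 : G (a • p + b • q).1 ≤ a * G p.1 + b * G q.1 := by
      have := hG.2 (Set.mem_univ p.1) (Set.mem_univ q.1) ha hb hab
      simpa using this
    have h2 : a * G p.1 + b * G q.1 < a * p.2 + b * q.2 := by
      rcases eq_or_lt_of_le ha with h | h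
      · have hb1 : b = 1 := by linarith
        subst hb1; rw [← h]; simpa using hq
      · have h3 : a * G p.1 < a * p.2 := by nlinarith
        have h4 : b * G q.1 ≤ b * q.2 := by nlinarith
        linarith
    have h5 : (a • p + b • q).2 = a * p.2 + b * q.2 := rfl
    rw [h5]; linarith
  have h0 : ((0 : E), G 0) ∉ S := by simp [hS]
  obtain ⟨φ, hφ⟩ := geometric_hahn_banach_open_point hSconv hSopen h0
  set c : ℝ := φ (0, 1) with hc
  have hsplit : ∀ (x : E) (r : ℝ), φ (x, r) = φ (x, 0) + r * c := by
    intro x r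
    have h6 : ((x : E), r) = (x, (0:ℝ)) + r • ((0 : E), (1:ℝ)) := by
      simp [Prod.ext_iff]
    rw [h6, map_add, φ.map_smul, smul_eq_mul, hc]
  have hphi0 : φ ((0:E), (0:ℝ)) = 0 := by
    have h7 : ((0:E), (0:ℝ)) = (0 : E × ℝ) := rfl
    rw [h7, map_zero]
  have hcneg : c < 0 := by
    have h8 := hφ (0, G 0 + 1) (by simp [hS])
    rw [hsplit 0 (G 0 + 1), hsplit 0 (G 0), hphi0] at h8
    nlinarith
  have key : ∀ x, φ (x, 0) + G x * c ≤ G 0 * c := by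
    intro x
    refine le_of_forall_pos_lt_add fun δ hδ => ?_
    have hε : (0:ℝ) < δ / (-c) := div_pos hδ (by linarith)
    have h9 := hφ (x, G x + δ / (-c)) (by simp [hS]; linarith)
    rw [hsplit x (G x + δ / (-c)), hsplit 0 (G 0), hphi0] at h9
    have hcne : c ≠ 0 := ne_of_lt hcneg
    have hcc : (δ / (-c)) * c = -δ := by
      rw [div_mul_eq_mul_div, mul_div_assoc, div_neg, div_self hcne]; ring
    nlinarith
  refine ⟨(-c)⁻¹ • φ.comp (ContinuousLinearMap.inl ℝ E ℝ), fun x => ?_⟩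
  have hkx := key x
  have hpos : (0:ℝ) < -c := by linarith
  simp only [ContinuousLinearMap.smul_apply, ContinuousLinearMap.comp_apply,
    ContinuousLinearMap.inl_apply, smul_eq_mul]
  have h10 : (-c)⁻¹ * φ (x, 0) ≤ G x - G 0 := by
    rw [inv_mul_le_iff₀ hpos]; nlinarith
  linarith

lemma mdot_cof_expand (A F : Matrix (Fin 3) (Fin 3) ℝ) :
    mdot A (cof F) = A 0 0 * F 1 1 * F 2 2 - A 0 0 * F 1 2 * F 2 1 - A 0 1 * F 1 0 * F 2 2 + A 0 1 * F 1 2 * F 2 0 + A 0 2 * F 1 0 * F 2 1 - A 0 2 * F 1 1 * F 2 0 - A 1 0 * F 0 1 * F 2 2 + A 1 0 * F 0 2 * F 2 1 + A 1 1 * F 0 0 * F 2 2 - A 1 1 * F 0 2 * F 2 0 - A 1 2 * F 0 0 * F 2 1 + A 1 2 * F 0 1 * F 2 0 + A 2 0 * F 0 1 * F 1 2 - A 2 0 * F 0 2 * F 1 1 - A 2 1 * F 0 0 * F 1 2 + A 2 1 * F 0 2 * F 1 0 + A 2 2 * F 0 0 * F 1 1 - A 2 2 * F 0 1 * F 1 0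 := by
  simp [mdot, cof, Fin.sum_univ_three, Matrix.det_fin_two, Fin.succAbove, Fin.lt_def, -Fin.val_pos_iff, -Fin.val_fin_lt]
  ring

noncomputable def cofBilFun (A X Y : Matrix (Fin 3) (Fin 3) ℝ) : ℝ := A 0 0 * (X 1 1 * Y 2 2 + X 2 2 * Y 1 1) / 2 - A 0 0 * (X 1 2 * Y 2 1 + X 2 1 * Y 1 2) / 2 - A 0 1 * (X 1 0 * Y 2 2 + X 2 2 * Y 1 0) / 2 + A 0 1 * (X 1 2 * Y 2 0 + X 2 0 * Y 1 2) / 2 + A 0 2 * (X 1 0 * Y 2 1 + X 2 1 * Y 1 0) / 2 - A 0 2 * (X 1 1 * Y 2 0 + X 2 0 * Y 1 1) / 2 - A 1 0 * (X 0 1 * Y 2 2 + X 2 2 * Y 0 1) / 2 + A 1 0 * (X 0 2 * Y 2 1 + X 2 1 * Y 0 2) / 2 + A 1 1 * (X 0 0 * Y 2 2 + X 2 2 * Y 0 0) / 2 - A 1 1 * (X 0 2 * Y 2 0 + X 2 0 * Y 0 2) / 2 - A 1 2 * (X 0 0 * Y 2 1 + X 2 1 * Y 0 0) / 2 + A 1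 2 * (X 0 1 * Y 2 0 + X 2 0 * Y 0 1) / 2 + A 2 0 * (X 0 1 * Y 1 2 + X 1 2 * Y 0 1) / 2 - A 2 0 * (X 0 2 * Y 1 1 + X 1 1 * Y 0 2) / 2 - A 2 1 * (X 0 0 * Y 1 2 + X 1 2 * Y 0 0) / 2 + A 2 1 * (X 0 2 * Y 1 0 + X 1 0 * Y 0 2) / 2 + A 2 2 * (X 0 0 * Y 1 1 + X 1 1 * Y 0 0) / 2 - A 2 2 * (X 0 1 * Y 1 0 + X 1 0 * Y 0 1) / 2

lemma cofBilFun_self (A ε : Matrix (Fin 3) (Fin 3) ℝ) : cofBilFun A ε ε = mdot A (cof ε) := by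
  rw [mdot_cof_expand]; simp only [cofBilFun]; ring

lemma cofBilFun_comm (A X Y : Matrix (Fin 3) (Fin 3) ℝ) : cofBilFun A X Y = cofBilFun A Y X := by
  simp only [cofBilFun]; ring

noncomputable def cofBil (A : Matrix (Fin 3) (Fin 3) ℝ) :
    Matrix (Fin 3) (Fin 3) ℝ →ₗ[ℝ] Matrix (Fin 3) (Fin 3) ℝ →ₗ[ℝ] ℝ :=
  LinearMap.mk₂ ℝ (cofBilFun A)
    (fun X X' Y => by simp only [cofBilFun, Matrix.add_apply]; ring)
    (fun c X Y => by simp only [cofBilFun, Matrix.smul_apply, smul_eq_mul]; ring)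
    (fun X Y Y' => by simp only [cofBilFun, Matrix.add_apply]; ring)
    (fun c X Y => by simp only [cofBilFun, Matrix.smul_apply, smul_eq_mul]; ring)

noncomputable def wv (X : Matrix (Fin 3) (Fin 3) ℝ) : Fin 3 → ℝ :=
  ![(X 2 1 - X 1 2)/2, (X 0 2 - X 2 0)/2, (X 1 0 - X 0 1)/2]

lemma key_identity (A F : Matrix (Fin 3) (Fin 3) ℝ) (hA : A.IsSymm) :
    mdot A (cof F) = mdot A (cof (symPart F)) + A.mulVec (wv F) ⬝ᵥ (wv F) := by
  have h10 : A 1 0 = A 0 1 := congrFun (congrFun hA 0) 1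
  have h20 : A 2 0 = A 0 2 := congrFun (congrFun hA 0) 2
  have h21 : A 2 1 = A 1 2 := congrFun (congrFun hA 1) 2
  rw [mdot_cof_expand, mdot_cof_expand]
  simp [symPart, wv, Matrix.mulVec, dotProduct, Fin.sum_univ_three,
    Matrix.add_apply, Matrix.smul_apply, Matrix.transpose_apply, smul_eq_mul]
  rw [h10, h20, h21]; ring

lemma symPart_isSymm (F : Matrix (Fin 3) (Fin 3) ℝ) : (symPart F).IsSymm := by
  unfold Matrix.IsSymm symPart
  ext i j
  simp [Matrix.add_apply, Matrix.smul_apply, Matrix.transpose_apply]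
  ring

lemma symPart_of_isSymm {ε : Matrix (Fin 3) (Fin 3) ℝ} (h : ε.IsSymm) : symPart ε = ε := by
  have h' : εᵀ = ε := h
  unfold symPart; rw [h']
  ext i j
  simp [Matrix.add_apply, Matrix.smul_apply]
  ring

lemma symPart_zero : symPart (0 : Matrix (Fin 3) (Fin 3) ℝ) = 0 := by
  unfold symPart; simp

lemma symPart_neg (F : Matrix (Fin 3) (Fin 3) ℝ) : symPart (-F) = - symPart F := by
  unfold symPart
  ext i j
  simp [Matrix.add_apply, Matrix.smul_apply, Matrix.neg_apply, Matrix.transpose_apply]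
  ring

lemma symPart_comb (a b : ℝ) (X Y : Matrix (Fin 3) (Fin 3) ℝ) :
    symPart (a • X + b • Y) = a • symPart X + b • symPart Y := by
  unfold symPart
  ext i j
  simp [Matrix.add_apply, Matrix.smul_apply, Matrix.transpose_apply]
  ring

lemma cof_neg (F : Matrix (Fin 3) (Fin 3) ℝ) : cof (-F) = cof F := by
  ext i j
  simp [cof, Matrix.det_fin_two]

lemma cof_zero : cof (0 : Matrix (Fin 3) (Fin 3) ℝ) = 0 := by
  ext i j
  simp [cof, Matrix.det_fin_two]

lemma isSymm_zero3 : (0 : Matrix (Fin 3) (Fin 3) ℝ).IsSymm := by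
  unfold Matrix.IsSymm; simp

lemma isSymm_neg3 {ε : Matrix (Fin 3) (Fin 3) ℝ} (h : ε.IsSymm) : (-ε).IsSymm := by
  have h' : εᵀ = ε := h
  unfold Matrix.IsSymm
  rw [Matrix.transpose_neg, h']

lemma isSymm_sub3 {x y : Matrix (Fin 3) (Fin 3) ℝ} (hx : x.IsSymm) (hy : y.IsSymm) :
    (x - y).IsSymm := by
  have hx' : xᵀ = x := hx
  have hy' : yᵀ = y := hy
  unfold Matrix.IsSymm
  rw [Matrix.transpose_sub, hx', hy']

lemma convex_isSymm : Convex ℝ {ε : Matrix (Fin 3) (Fin 3) ℝ | ε.IsSymm} := by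
  intro x hx y hy a b ha hb hab
  have hx' : xᵀ = x := hx
  have hy' : yᵀ = y := hy
  simp only [Set.mem_setOf_eq, Matrix.IsSymm]
  rw [Matrix.transpose_add, Matrix.transpose_smul, Matrix.transpose_smul, hx', hy']

lemma quad_comb {M : Type*} [AddCommGroup M] [Module ℝ M]
    (B : M →ₗ[ℝ] M →ₗ[ℝ] ℝ) (x y : M) (a b : ℝ) (hab : a + b = 1) :
    a * B x x + b * B y y - B (a • x + b • y) (a • x + b • y)
      = a * b * (B (x - y) (x - y)) := by
  have hb' : b = 1 - a := by linarith
  subst hb'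
  simp only [map_add, map_sub, LinearMap.add_apply, LinearMap.sub_apply,
    LinearMap.smul_apply, _root_.map_smul, smul_eq_mul]
  ring

lemma quad_vec_comb (A : Matrix (Fin 3) (Fin 3) ℝ) (x y : Fin 3 → ℝ) (a b : ℝ)
    (hab : a + b = 1) :
    a * (A.mulVec x ⬝ᵥ x) + b * (A.mulVec y ⬝ᵥ y) - A.mulVec (a • x + b • y) ⬝ᵥ (a • x + b • y)
      = a * b * (A.mulVec (x - y) ⬝ᵥ (x - y)) := by
  have hb' : b = 1 - a := by linarith
  subst hb'
  simp [Matrix.mulVec, dotProduct, Fin.sum_univ_three, Pi.add_apply, Pi.smul_apply,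
    Pi.sub_apply, smul_eq_mul]
  ring

lemma mdot_comb (A : Matrix (Fin 3) (Fin 3) ℝ) (a b : ℝ) (C D : Matrix (Fin 3) (Fin 3) ℝ) :
    mdot A (a • C + b • D) = a * mdot A C + b * mdot A D := by
  simp [mdot, Fin.sum_univ_three, Matrix.add_apply, Matrix.smul_apply, smul_eq_mul]
  ring

noncomputable def skw (x : Fin 3 → ℝ) : Matrix (Fin 3) (Fin 3) ℝ :=
  !![0, -x 2, x 1; x 2, 0, -x 0; -x 1, x 0, 0]

lemma skw_transpose (x : Fin 3 → ℝ) : (skw x)ᵀ = -(skw x) := by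
  ext i j
  fin_cases i <;> fin_cases j <;> simp [skw]

lemma symPart_skw (x : Fin 3 → ℝ) : symPart (skw x) = 0 := by
  unfold symPart
  rw [skw_transpose]
  simp

lemma mdot_cof_skw (B : Matrix (Fin 3) (Fin 3) ℝ) (x : Fin 3 → ℝ) :
    mdot B (cof (skw x)) = B.mulVec x ⬝ᵥ x := by
  rw [mdot_cof_expand]
  simp [skw, Matrix.mulVec, dotProduct, Fin.sum_univ_three]
  ring

lemma symPart_quad (B : Matrix (Fin 3) (Fin 3) ℝ) (x : Fin 3 → ℝ) :
    (symPart B).mulVec x ⬝ᵥ x = B.mulVec x ⬝ᵥ x := by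
  simp [symPart, Matrix.mulVec, dotProduct, Fin.sum_univ_three, Matrix.add_apply,
    Matrix.smul_apply, Matrix.transpose_apply]
  ring

lemma mdot_symPart_cof (B ε : Matrix (Fin 3) (Fin 3) ℝ) (hε : ε.IsSymm) :
    mdot (symPart B) (cof ε) = mdot B (cof ε) := by
  have e10 : ε 0 1 = ε 1 0 := congrFun (congrFun hε 1) 0
  have e20 : ε 0 2 = ε 2 0 := congrFun (congrFun hε 2) 0
  have e21 : ε 1 2 = ε 2 1 := congrFun (congrFun hε 2) 1
  rw [mdot_cof_expand, mdot_cof_expand]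
  simp [symPart, Matrix.add_apply, Matrix.smul_apply, Matrix.transpose_apply]
  rw [e10, e20, e21]; ring

lemma wv_comb (a b : ℝ) (X Y : Matrix (Fin 3) (Fin 3) ℝ) :
    wv (a • X + b • Y) = a • wv X + b • wv Y := by
  funext i
  fin_cases i <;>
    simp [wv, Matrix.add_apply, Matrix.smul_apply, smul_eq_mul] <;> ring

/-- Characterization of symmetric polyconvex quadratic forms in 3d. -/
theorem symmetric_polyconvex_quadratic_forms_3d (f : Matrix (Fin 3) (Fin 3) ℝ → ℝ)
    (hf : IsSymQuadForm3 f) :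
    (SymPolyconvex3 f ↔
      ∃ h : Matrix (Fin 3) (Fin 3) ℝ → ℝ, IsSymQuadForm3 h ∧
        ConvexOn ℝ {ε : Matrix (Fin 3) (Fin 3) ℝ | ε.IsSymm} h ∧
        ∃ A : Matrix (Fin 3) (Fin 3) ℝ, A.IsSymm ∧ PosSemidefM A ∧
          ∀ ε : Matrix (Fin 3) (Fin 3) ℝ, ε.IsSymm → f ε = h ε - mdot A (cof ε)) ∧
    (SymPolyconvex3 f ↔
      ∃ A : Matrix (Fin 3) (Fin 3) ℝ, A.IsSymm ∧ PosSemidefM A ∧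
        ∀ ε : Matrix (Fin 3) (Fin 3) ℝ, ε.IsSymm → 0 ≤ f ε + mdot A (cof ε)) := by
  obtain ⟨Bf, hBfs, hBf⟩ := hf
  have hf0 : f 0 = 0 := by
    rw [hBf 0 isSymm_zero3]; simp
  -- (i) → (iii)
  have p1p3 : SymPolyconvex3 f →
      ∃ A : Matrix (Fin 3) (Fin 3) ℝ, A.IsSymm ∧ PosSemidefM A ∧
        ∀ ε : Matrix (Fin 3) (Fin 3) ℝ, ε.IsSymm → 0 ≤ f ε + mdot A (cof ε) := by
    rintro ⟨G, hGconv, hGeq⟩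
    obtain ⟨ℓ, hℓ⟩ := exists_subgradient hGconv
    have hG0 : G 0 = 0 := by
      have h00 : f (symPart 0) = G (0, cof 0, Matrix.det (0 : Matrix (Fin 3) (Fin 3) ℝ)) :=
        hGeq 0
      rw [symPart_zero, hf0, cof_zero] at h00
      have : ((0 : Matrix (Fin 3) (Fin 3) ℝ).det) = 0 := by simp
      rw [this] at h00
      exact h00.symm
    set j2 : Matrix (Fin 3) (Fin 3) ℝ →ₗ[ℝ]
        Matrix (Fin 3) (Fin 3) ℝ × Matrix (Fin 3) (Fin 3) ℝ × ℝ :=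
      { toFun := fun C => (0, C, 0)
        map_add' := by intro C D; simp [Prod.ext_iff]
        map_smul' := by intro c C; simp [Prod.ext_iff] } with hj2
    set ℓ2 : Matrix (Fin 3) (Fin 3) ℝ →ₗ[ℝ] ℝ := ℓ.toLinearMap.comp j2 with hℓ2
    have hl2app : ∀ C, ℓ2 C = ℓ (0, C, 0) := fun C => rfl
    set A₀ : Matrix (Fin 3) (Fin 3) ℝ :=
      Matrix.of (fun i j => -(ℓ2 (single i j 1))) with hA₀
    have hdecomp : ∀ C : Matrix (Fin 3) (Fin 3) ℝ,
        ℓ2 C = ∑ i, ∑ j, C i j * ℓ2 (single i j 1) := by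
      intro C
      conv_lhs => rw [matrix_eq_sum_single C]
      rw [map_sum]
      refine Finset.sum_congr rfl fun i _ => ?_
      rw [map_sum]
      refine Finset.sum_congr rfl fun j _ => ?_
      have hsb : single i j (C i j) = C i j • single i j (1:ℝ) := by
        rw [smul_single, smul_eq_mul, mul_one]
      rw [hsb, LinearMap.map_smul, smul_eq_mul]
    have hmdot : ∀ C, mdot A₀ C = - ℓ2 C := by
      intro C
      rw [hdecomp C]
      simp only [mdot, hA₀, Matrix.of_apply, Fin.sum_univ_three]
      ring
    have key : ∀ F, 0 ≤ f (symPart F) + mdot A₀ (cof F) := by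
      intro F
      have e1 : f (symPart F) = G (F, cof F, F.det) := hGeq F
      have e2 : f (symPart (-F)) = G (-F, cof (-F), (-F).det) := hGeq (-F)
      rw [cof_neg, symPart_neg] at e2
      have hdet : (-F).det = - F.det := by
        rw [Matrix.det_neg]; norm_num
      rw [hdet] at e2
      have hfneg : f (-(symPart F)) = f (symPart F) := by
        rw [hBf _ (isSymm_neg3 (symPart_isSymm F)), hBf _ (symPart_isSymm F)]
        simp
      rw [hfneg] at e2
      have i1 := hℓ (F, cof F, F.det)
      have i2 := hℓ (-F, cof F, -F.det)
      have hsum : ℓ (F, cof F, F.det) + ℓ (-F, cof F, -F.det) = 2 * ℓ2 (cof F) := by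
        rw [← map_add]
        have hp : (F, cof F, F.det) + (-F, cof F, -F.det)
            = (2:ℝ) • ((0 : Matrix (Fin 3) (Fin 3) ℝ), cof F, (0:ℝ)) := by
          refine Prod.ext ?_ (Prod.ext ?_ ?_)
          · simp
          · show cof F + cof F = (2:ℝ) • cof F
            rw [two_smul]
          · show F.det + -F.det = (2:ℝ) • (0:ℝ)
            simp
        rw [hp, ℓ.map_smul, smul_eq_mul, hl2app]
      rw [hmdot]
      rw [hG0, ← e1] at i1
      rw [hG0, ← e2] at i2
      have : 2 * ℓ2 (cof F) ≤ 2 * f (symPart F) := by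
        rw [← hsum]; linarith
      linarith
    refine ⟨symPart A₀, symPart_isSymm A₀, ?_, ?_⟩
    · intro x
      have hk := key (skw x)
      rw [symPart_skw, hf0, mdot_cof_skw] at hk
      rw [symPart_quad]
      linarith
    · intro ε hε
      have hk := key ε
      rw [symPart_of_isSymm hε] at hk
      rw [mdot_symPart_cof A₀ ε hε]
      linarith
  -- (iii) → (ii)
  have p3p2 : (∃ A : Matrix (Fin 3) (Fin 3) ℝ, A.IsSymm ∧ PosSemidefM A ∧
        ∀ ε : Matrix (Fin 3) (Fin 3) ℝ, ε.IsSymm → 0 ≤ f ε + mdot A (cof ε)) →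
      ∃ h : Matrix (Fin 3) (Fin 3) ℝ → ℝ, IsSymQuadForm3 h ∧
        ConvexOn ℝ {ε : Matrix (Fin 3) (Fin 3) ℝ | ε.IsSymm} h ∧
        ∃ A : Matrix (Fin 3) (Fin 3) ℝ, A.IsSymm ∧ PosSemidefM A ∧
          ∀ ε : Matrix (Fin 3) (Fin 3) ℝ, ε.IsSymm → f ε = h ε - mdot A (cof ε) := by
    rintro ⟨A, hAsym, hApsd, hpos⟩
    set B : Matrix (Fin 3) (Fin 3) ℝ →ₗ[ℝ] Matrix (Fin 3) (Fin 3) ℝ →ₗ[ℝ] ℝ :=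
      Bf + cofBil A with hB
    have hval : ∀ ε : Matrix (Fin 3) (Fin 3) ℝ, ε.IsSymm →
        f ε + mdot A (cof ε) = B ε ε := by
      intro ε hε
      rw [hB]
      simp only [LinearMap.add_apply]
      rw [← hBf ε hε]
      have : cofBil A ε ε = cofBilFun A ε ε := rfl
      rw [this, cofBilFun_self]
    refine ⟨fun ε => f ε + mdot A (cof ε), ⟨B, ?_, ?_⟩, ⟨convex_isSymm, ?_⟩,
      A, hAsym, hApsd, ?_⟩
    · intro X Y
      rw [hB]
      simp only [LinearMap.add_apply]
      rw [hBfs X Y]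
      have h1 : cofBil A X Y = cofBilFun A X Y := rfl
      have h2 : cofBil A Y X = cofBilFun A Y X := rfl
      rw [h1, h2, cofBilFun_comm]
    · intro ε hε
      exact hval ε hε
    · intro x hx y hy a b ha hb hab
      have hx' : (x : Matrix (Fin 3) (Fin 3) ℝ).IsSymm := hx
      have hy' : (y : Matrix (Fin 3) (Fin 3) ℝ).IsSymm := hy
      have hc : (a • x + b • y).IsSymm := convex_isSymm hx hy ha hb hab
      have e1 := hval x hx'
      have e2 := hval y hy'
      have e3 := hval (a • x + b • y) hc
      have e4 := quad_comb B x y a b hab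
      have e5 : 0 ≤ B (x - y) (x - y) := by
        rw [← hval (x - y) (isSymm_sub3 hx' hy')]
        exact hpos (x - y) (isSymm_sub3 hx' hy')
      have e6 : 0 ≤ a * b := mul_nonneg ha hb
      simp only [smul_eq_mul]
      nlinarith
    · intro ε hε
      ring
  -- (ii) → (i)
  have p2p1 : (∃ h : Matrix (Fin 3) (Fin 3) ℝ → ℝ, IsSymQuadForm3 h ∧
        ConvexOn ℝ {ε : Matrix (Fin 3) (Fin 3) ℝ | ε.IsSymm} h ∧
        ∃ A : Matrix (Fin 3) (Fin 3) ℝ, A.IsSymm ∧ PosSemidefM A ∧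
          ∀ ε : Matrix (Fin 3) (Fin 3) ℝ, ε.IsSymm → f ε = h ε - mdot A (cof ε)) →
      SymPolyconvex3 f := by
    rintro ⟨h, _, hconv, A, hAsym, hApsd, heq⟩
    refine ⟨fun p => h (symPart p.1) + (A.mulVec (wv p.1) ⬝ᵥ (wv p.1)) - mdot A p.2.1,
      ⟨convex_univ, ?_⟩, ?_⟩
    · intro p _ q _ a b ha hb hab
      dsimp only
      simp only [smul_eq_mul]
      have c1 : (a • p + b • q).1 = a • p.1 + b • q.1 := rfl
      have c2 : (a • p + b • q).2.1 = a • p.2.1 + b • q.2.1 := rfl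
      have hpart : h (symPart ((a • p + b • q).1))
          ≤ a * h (symPart p.1) + b * h (symPart q.1) := by
        rw [c1, symPart_comb]
        have := hconv.2 (symPart_isSymm p.1) (symPart_isSymm q.1) ha hb hab
        simpa using this
      have hquad : A.mulVec (wv ((a • p + b • q).1)) ⬝ᵥ (wv ((a • p + b • q).1))
          ≤ a * (A.mulVec (wv p.1) ⬝ᵥ (wv p.1)) + b * (A.mulVec (wv q.1) ⬝ᵥ (wv q.1)) := by
        rw [c1, wv_comb]
        have e4 := quad_vec_comb A (wv p.1) (wv q.1) a b hab
        have e5 := hApsd (wv p.1 - wv q.1)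
        have e6 : 0 ≤ a * b := mul_nonneg ha hb
        nlinarith
      have hlin : mdot A ((a • p + b • q).2.1) = a * mdot A p.2.1 + b * mdot A q.2.1 := by
        rw [c2, mdot_comb]
      rw [hlin]
      linarith
    · intro F
      have h1 := heq (symPart F) (symPart_isSymm F)
      have h2 := key_identity A F hAsym
      show f (symPart F) = h (symPart F) + (A.mulVec (wv F) ⬝ᵥ (wv F)) - mdot A (cof F)
      linarith
  exact ⟨⟨fun h1 => p3p2 (p1p3 h1), p2p1⟩, ⟨p1p3, fun h3 => p2p1 (p3p2 h3)⟩⟩
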